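/- Let σ = (C₁ ⊔ … ⊔ C_m ⊑ D₁ ⊔ … ⊔ Dₙ) be an interval-safe PL subsumption query such that each C_i is normalized with respect to K and O. Then K_O^- ∪ pos(O_K^+) ⊨ σ if and only if for every i ∈ [1,m] there exists j ∈ [1,n] such that K_O^- ∪ pos(O_K^+) ⊨ C_i ⊑ D_j. -/

import Mathlib

/-! Core formalization of the policy logic `PL` of Bonatti et al.,
    "Machine Understandable Policies and GDPR Compliance Checking". -/

namespace PLPaper

/-- Simple `PL` concepts: `C ::= A | ⊥ | ∃f.[l,u] | ∃R.C | C ⊓ C`. -/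
inductive SPL : Type
  | atom  : ℕ → SPL
  | bot   : SPL
  | ival  : ℕ → ℤ → ℤ → SPL
  | ex    : ℕ → SPL → SPL
  | inter : SPL → SPL → SPL
  deriving DecidableEq

/-- A full `PL` concept: a union `C₁ ⊔ … ⊔ Cₙ` of simple concepts, given as a list. -/
abbrev PLC := List SPL

/-- Axioms of a `PL` knowledge base. -/
inductive PLAx : Type
  | funcRole : ℕ → PLAx              -- func(R), R a role name
  | funcProp : ℕ → PLAx              -- func(f), f a concrete property
  | rangeAx  : ℕ → ℕ → PLAx          -- range(R, A)
  | incl     : ℕ → ℕ → PLAx          -- A ⊑ B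
  | disj     : ℕ → ℕ → PLAx          -- disj(A, B)
  deriving DecidableEq

/-- A description-logic interpretation (concept names, role names, concrete properties). -/
structure Interp : Type 1 where
  Δ : Type
  nonempty : Nonempty Δ
  conc : ℕ → Set Δ
  role : ℕ → Set (Δ × Δ)
  cprop : ℕ → Set (Δ × ℤ)

/-- Semantics of simple `PL` concepts. -/
def SPL.sem (I : Interp) : SPL → Set I.Δ
  | .atom a => I.conc a
  | .bot => ∅
  | .ival f l u => {d | ∃ i : ℤ, l ≤ i ∧ i ≤ u ∧ (d, i) ∈ I.cprop f}
  | .ex r c => {d | ∃ e, (d, e) ∈ I.role r ∧ e ∈ c.sem I}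
  | .inter c d => c.sem I ∩ d.sem I

/-- Semantics of full `PL` concepts (finite unions). -/
def semL (I : Interp) (C : PLC) : Set I.Δ := {d | ∃ c ∈ C, d ∈ c.sem I}

/-- Satisfaction of a `PL` axiom. -/
def Interp.satAx (I : Interp) : PLAx → Prop
  | .funcRole r => ∀ ⦃d e e'⦄, (d, e) ∈ I.role r → (d, e') ∈ I.role r → e = e'
  | .funcProp f => ∀ ⦃d i j⦄, (d, i) ∈ I.cprop f → (d, j) ∈ I.cprop f → i = j
  | .rangeAx r a => ∀ ⦃d e⦄, (d, e) ∈ I.role r → e ∈ I.conc a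
  | .incl a b => I.conc a ⊆ I.conc b
  | .disj a b => I.conc a ∩ I.conc b = ∅

def Interp.satKB (I : Interp) (K : Set PLAx) : Prop := ∀ ax ∈ K, I.satAx ax

/-- `K ⊨ C ⊑ D` for full `PL` concepts. -/
def Entails (K : Set PLAx) (C D : PLC) : Prop :=
  ∀ I : Interp, I.satKB K → semL I C ⊆ semL I D

/-- The multiset of conjuncts of a simple concept (intersections treated as sets:
    ordering and parenthesization of conjuncts is irrelevant). -/
def SPL.conj : SPL → Multiset SPL
  | .inter c d => c.conj + d.conj
  | c => {c}

/-- `⊑*`: the reflexive–transitive closure of the atomic inclusions of `K`. -/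
def SubStar (K : Set PLAx) : ℕ → ℕ → Prop :=
  Relation.ReflTransGen fun a b => PLAx.incl a b ∈ K

/-- One application of one of the seven normalization rules w.r.t. `K` (Table 3);
    intersections are treated as sets of conjuncts, and rules may be applied to
    subconcepts (congruence). -/
inductive Rw (K : Set PLAx) : SPL → SPL → Prop
  /-- rule 1: `⊥ ⊓ D ⇝ ⊥` -/
  | botConj (C : SPL) :
      SPL.bot ∈ C.conj → C ≠ SPL.bot → Rw K C SPL.bot
  /-- rule 2: `∃R.⊥ ⇝ ⊥` -/
  | exBot (r : ℕ) : Rw K (SPL.ex r SPL.bot) SPL.bot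
  /-- rule 3: `∃f.[l,u] ⇝ ⊥` if `l > u` -/
  | emptyIval (f : ℕ) (l u : ℤ) : u < l → Rw K (SPL.ival f l u) SPL.bot
  /-- rule 4: merge existential restrictions over a functional role -/
  | funcRole (C C' : SPL) (r : ℕ) (D D' : SPL) (rest : Multiset SPL) :
      PLAx.funcRole r ∈ K →
      C.conj = {SPL.ex r D, SPL.ex r D'} + rest →
      C'.conj = {SPL.ex r (SPL.inter D D')} + rest →
      Rw K C C'
  /-- rule 5: merge interval constraints over a functional concrete property -/
  | funcProp (C C' : SPL) (f : ℕ) (l₁ u₁ l₂ u₂ : ℤ) (rest : Multiset SPL) :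
      PLAx.funcProp f ∈ K →
      C.conj = {SPL.ival f l₁ u₁, SPL.ival f l₂ u₂} + rest →
      C'.conj = {SPL.ival f (max l₁ l₂) (min u₁ u₂)} + rest →
      Rw K C C'
  /-- rule 6: add range information -/
  | rangeRule (C C' : SPL) (r a : ℕ) (D : SPL) (rest : Multiset SPL) :
      PLAx.rangeAx r a ∈ K →
      SPL.atom a ∉ D.conj → SPL.bot ∉ D.conj →
      C.conj = {SPL.ex r D} + rest →
      C'.conj = {SPL.ex r (SPL.inter D (SPL.atom a))} + rest →
      Rw K C C'
  /-- rule 7: disjointness clash -/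
  | disjRule (C : SPL) (a₁ a₂ b₁ b₂ : ℕ) :
      SPL.atom a₁ ∈ C.conj → SPL.atom a₂ ∈ C.conj →
      SubStar K a₁ b₁ → SubStar K a₂ b₂ →
      PLAx.disj b₁ b₂ ∈ K →
      Rw K C SPL.bot
  /-- rules may be applied inside existential restrictions -/
  | exCongr (r : ℕ) (c c' : SPL) : Rw K c c' → Rw K (SPL.ex r c) (SPL.ex r c')
  /-- rules may be applied to one conjunct of an intersection -/
  | interCongr (C C' c c' : SPL) (rest : Multiset SPL) :
      Rw K c c' →
      C.conj = {c} + rest → C'.conj = {c'} + rest →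
      Rw K C C'

/-- A simple concept is normalized w.r.t. `K` when no rule is applicable. -/
def Normalized (K : Set PLAx) (C : SPL) : Prop := ¬ ∃ C', Rw K C C'

/-- All interval constraints `∃f.[l,u]` occurring (at any depth) in a simple concept. -/
def SPL.ivalsOf : SPL → List (ℕ × ℤ × ℤ)
  | .ival f l u => [(f, l, u)]
  | .ex _ c => c.ivalsOf
  | .inter c d => c.ivalsOf ++ d.ivalsOf
  | _ => []

def ivalsL (C : PLC) : List (ℕ × ℤ × ℤ) := C.flatMap SPL.ivalsOf

/-- The integers occurring as interval endpoints in a full concept. -/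
def endpointsL (D : PLC) : List ℤ := (ivalsL D).flatMap fun t => [t.2.1, t.2.2]

/-- A subsumption `C ⊑ D` is interval safe iff every interval of `C` is either
    contained in, or disjoint from, every interval of `D`. -/
def IntervalSafe (C D : PLC) : Prop :=
  ∀ p ∈ ivalsL C, ∀ q ∈ ivalsL D,
    Set.Icc p.2.1 p.2.2 ⊆ Set.Icc q.2.1 q.2.2 ∨
      Set.Icc p.2.1 p.2.2 ∩ Set.Icc q.2.1 q.2.2 = ∅

/-- Given the ascending chain `x₀ < x₁ < … < x_{r+1}` of cut points, produce the
    subinterval constraints `[xᵢ,xᵢ]`, `[xᵢ+1, xᵢ₊₁-1]`, …, `[x_{r+1},x_{r+1}]`. -/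
def chainPieces (f : ℕ) : List ℤ → List SPL
  | [] => []
  | [x] => [SPL.ival f x x]
  | x :: y :: rest =>
      SPL.ival f x x :: SPL.ival f (x + 1) (y - 1) :: chainPieces f (y :: rest)

/-- The endpoints of `D` lying in `[l,u]`, sorted in increasing order, without duplicates. -/
def cutPoints (E : List ℤ) (l u : ℤ) : List ℤ :=
  ((E.filter fun x => decide (l ≤ x ∧ x ≤ u)).toFinset).sort (· ≤ ·)

/-- Interval splitting of a single constraint `∃f.[l,u]` w.r.t. the endpoints `E`. -/
def splitIval (E : List ℤ) (f : ℕ) (l u : ℤ) : List SPL :=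
  chainPieces f (l :: (cutPoints E l u ++ [u]))

/-- Interval normalization of a simple concept w.r.t. endpoints `E`: replace each
    interval constraint by the union of its pieces and lift unions to the top level
    (distributivity of `⊓` over `⊔` and `∃R.(C₁ ⊔ C₂) ≡ ∃R.C₁ ⊔ ∃R.C₂`). -/
def SPL.splitC (E : List ℤ) : SPL → List SPL
  | .atom a => [.atom a]
  | .bot => [.bot]
  | .ival f l u => splitIval E f l u
  | .ex r c => (c.splitC E).map (SPL.ex r)
  | .inter c d => (c.splitC E).flatMap fun c' => (d.splitC E).map fun d' => SPL.inter c' d'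

/-- `split(C, D)` for full `PL` concepts. -/
def splitL (C D : PLC) : PLC := C.flatMap (SPL.splitC (endpointsL D))

/-- Size of (the encoding of) a simple concept. -/
def SPL.size : SPL → ℕ
  | .atom _ => 1
  | .bot => 1
  | .ival _ _ _ => 1
  | .ex _ c => c.size + 1
  | .inter c d => c.size + d.size + 1

/-- Size of a full concept. -/
def sizeL (C : PLC) : ℕ := (C.map SPL.size).sum + 1

/-- The structural subsumption algorithm `STS` (Algorithm 1): `STS K C D` holds
    iff the algorithm returns `true` on the elementary subsumption `C ⊑ D`. -/
inductive STS (K : Set PLAx) : SPL → SPL → Prop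
  | botCase (D : SPL) : STS K SPL.bot D
  | atomCase (C : SPL) (a a' : ℕ) :
      SPL.atom a' ∈ C.conj → SubStar K a' a → STS K C (SPL.atom a)
  | ivalCase (C : SPL) (f : ℕ) (l u l' u' : ℤ) :
      SPL.ival f l' u' ∈ C.conj → l ≤ l' → u' ≤ u → STS K C (SPL.ival f l u)
  | exCase (C C' D' : SPL) (r : ℕ) :
      SPL.ex r C' ∈ C.conj → STS K C' D' → STS K C (SPL.ex r D')
  | interCase (C D' D'' : SPL) :
      STS K C D' → STS K C D'' → STS K C (SPL.inter D' D'')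

/-- Pointwise exhaustive normalization of the disjuncts of a full concept. -/
def RwL (K : Set PLAx) (C C' : PLC) : Prop :=
  List.Forall₂ (Relation.ReflTransGen (Rw K)) C C'

/-- `PLR(K, C ⊑ D) = true` (Algorithm 2): normalize `C` exhaustively with the seven
    rules, split intervals w.r.t. `D`, and check every resulting disjunct against
    some disjunct of `D` with `STS`. -/
def PLRaccept (K : Set PLAx) (C D : PLC) : Prop :=
  ∃ C' : PLC, RwL K C C' ∧ (∀ c ∈ C', Normalized K c) ∧
    ∀ c ∈ splitL C' D, ∃ d ∈ D, STS K c d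

/-! ### Signatures -/

def SPL.rNames : SPL → Set ℕ
  | .ex r c => insert r c.rNames
  | .inter c d => c.rNames ∪ d.rNames
  | _ => ∅

def SPL.cNames : SPL → Set ℕ
  | .atom a => {a}
  | .ex _ c => c.cNames
  | .inter c d => c.cNames ∪ d.cNames
  | _ => ∅

def rNamesL (C : PLC) : Set ℕ := {n | ∃ c ∈ C, n ∈ SPL.rNames c}
def cNamesL (C : PLC) : Set ℕ := {n | ∃ c ∈ C, n ∈ SPL.cNames c}

def PLAx.rNames : PLAx → Set ℕ
  | .funcRole r => {r}
  | .rangeAx r _ => {r}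
  | _ => ∅

def PLAx.cNames : PLAx → Set ℕ
  | .rangeAx _ a => {a}
  | .incl a b => {a, b}
  | .disj a b => {a, b}
  | _ => ∅

def rNamesPL (K : Set PLAx) : Set ℕ := {n | ∃ ax ∈ K, n ∈ PLAx.rNames ax}
def cNamesPL (K : Set PLAx) : Set ℕ := {n | ∃ ax ∈ K, n ∈ PLAx.cNames ax}

/-! ### Horn-SRIQ oracles -/

/-- SRIQ roles: role names and their inverses. -/
inductive HRole : Type
  | name : ℕ → HRole
  | inv  : ℕ → HRole
  deriving DecidableEq

/-- The concepts allowed in normal-form Horn-SRIQ axioms: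
    concept names, `⊤`, `⊥`, and `∃S.Self`. -/
inductive HAtom : Type
  | name : ℕ → HAtom
  | top  : HAtom
  | bot  : HAtom
  | self : HRole → HAtom
  deriving DecidableEq

/-- Horn-SRIQ axioms in normal form (Table 2), plus role axioms. -/
inductive HAx : Type
  | sub2    : HAtom → HAtom → HAtom → HAx      -- C₁ ⊓ C₂ ⊑ D
  | subEx   : HRole → HAtom → HAtom → HAx      -- ∃R.C ⊑ D
  | subAll  : HAtom → HRole → HAtom → HAx      -- C ⊑ ∀R.D
  | subToEx : HAtom → HRole → HAtom → HAx      -- C ⊑ ∃R.D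
  | atMost1 : HAtom → HRole → HAtom → HAx      -- C ⊑ ≤1 S.D
  | atLeast : HAtom → ℕ → HRole → HAtom → HAx  -- C ⊑ ≥n S.D
  | rIncl   : List HRole → HRole → HAx         -- R₁ ∘ … ∘ Rₙ ⊑ R
  | rDisj   : HRole → HRole → HAx              -- disj(S₁, S₂)

def HRole.sem (I : Interp) : HRole → Set (I.Δ × I.Δ)
  | .name r => I.role r
  | .inv r => {p | (p.2, p.1) ∈ I.role r}

def HAtom.sem (I : Interp) : HAtom → Set I.Δ
  | .name a => I.conc a
  | .top => Set.univ
  | .bot => ∅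
  | .self s => {d | (d, d) ∈ s.sem I}

def HRole.semChain (I : Interp) : List HRole → Set (I.Δ × I.Δ)
  | [] => {p | p.1 = p.2}
  | r :: rest => {p | ∃ z, (p.1, z) ∈ r.sem I ∧ (z, p.2) ∈ HRole.semChain I rest}

def Interp.satHAx (I : Interp) : HAx → Prop
  | .sub2 c₁ c₂ d => c₁.sem I ∩ c₂.sem I ⊆ d.sem I
  | .subEx r c d => {x | ∃ y, (x, y) ∈ r.sem I ∧ y ∈ c.sem I} ⊆ d.sem I
  | .subAll c r d => ∀ ⦃x y⦄, x ∈ c.sem I → (x, y) ∈ r.sem I → y ∈ d.sem I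
  | .subToEx c r d => ∀ ⦃x⦄, x ∈ c.sem I → ∃ y, (x, y) ∈ r.sem I ∧ y ∈ d.sem I
  | .atMost1 c s d => ∀ ⦃x y z⦄, x ∈ c.sem I → (x, y) ∈ s.sem I → y ∈ d.sem I →
      (x, z) ∈ s.sem I → z ∈ d.sem I → y = z
  | .atLeast c n s d => ∀ ⦃x⦄, x ∈ c.sem I →
      ∃ t : Finset I.Δ, n ≤ t.card ∧ ∀ y ∈ t, (x, y) ∈ s.sem I ∧ y ∈ d.sem I
  | .rIncl rs r => HRole.semChain I rs ⊆ r.sem I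
  | .rDisj s₁ s₂ => s₁.sem I ∩ s₂.sem I = ∅

def Interp.satHKB (I : Interp) (O : Set HAx) : Prop := ∀ ax ∈ O, I.satHAx ax

def HRole.base : HRole → ℕ
  | .name r => r
  | .inv r => r

def HAtom.cNames : HAtom → Set ℕ
  | .name a => {a}
  | _ => ∅

def HAtom.rNames : HAtom → Set ℕ
  | .self s => {s.base}
  | _ => ∅

def HAx.cNames : HAx → Set ℕ
  | .sub2 c₁ c₂ d => c₁.cNames ∪ c₂.cNames ∪ d.cNames
  | .subEx _ c d => c.cNames ∪ d.cNames
  | .subAll c _ d => c.cNames ∪ d.cNames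
  | .subToEx c _ d => c.cNames ∪ d.cNames
  | .atMost1 c _ d => c.cNames ∪ d.cNames
  | .atLeast c _ _ d => c.cNames ∪ d.cNames
  | .rIncl _ _ => ∅
  | .rDisj _ _ => ∅

def HAx.rNames : HAx → Set ℕ
  | .sub2 c₁ c₂ d => c₁.rNames ∪ c₂.rNames ∪ d.rNames
  | .subEx r c d => insert r.base (c.rNames ∪ d.rNames)
  | .subAll c r d => insert r.base (c.rNames ∪ d.rNames)
  | .subToEx c r d => insert r.base (c.rNames ∪ d.rNames)
  | .atMost1 c s d => insert s.base (c.rNames ∪ d.rNames)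
  | .atLeast c _ s d => insert s.base (c.rNames ∪ d.rNames)
  | .rIncl rs r => insert r.base {n | ∃ s ∈ rs, n = HRole.base s}
  | .rDisj s₁ s₂ => {s₁.base, s₂.base}

def rNamesH (O : Set HAx) : Set ℕ := {n | ∃ ax ∈ O, n ∈ HAx.rNames ax}
def cNamesH (O : Set HAx) : Set ℕ := {n | ∃ ax ∈ O, n ∈ HAx.cNames ax}

/-! ### Axiom shifting, oracle queries, `pos(O_K⁺)` -/

/-- Range and functionality axioms. -/
def isRF : PLAx → Prop
  | .funcRole _ => True
  | .funcProp _ => True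
  | .rangeAx _ _ => True
  | _ => False

/-- `K_O⁻`: the range and functionality axioms of `K`. -/
def Kminus (K : Set PLAx) : Set PLAx := {ax | ax ∈ K ∧ isRF ax}

/-- `K \ K_O⁻`: the inclusion and disjointness axioms of `K`, shifted to the oracle. -/
def Kshift (K : Set PLAx) : Set PLAx := {ax | ax ∈ K ∧ ¬ isRF ax}

/-- Satisfaction of `O_K⁺ = O ∪ (K \ K_O⁻)`. -/
def satOplus (I : Interp) (K : Set PLAx) (O : Set HAx) : Prop :=
  I.satHKB O ∧ I.satKB (Kshift K)

/-- An oracle query `A₁ ⊓ … ⊓ A_m ⊑ A_{m+1} ⊔ … ⊔ Aₙ` (right-hand side `⊥` when empty). -/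
structure OQuery : Type where
  lhs : List ℕ
  rhs : List ℕ

def Interp.satQ (I : Interp) (q : OQuery) : Prop :=
  {d | ∀ a ∈ q.lhs, d ∈ I.conc a} ⊆ {d | ∃ b ∈ q.rhs, d ∈ I.conc b}

/-- The concept names of `sig(O_K⁺)`. -/
def cNamesOplus (K : Set PLAx) (O : Set HAx) : Set ℕ :=
  cNamesH O ∪ cNamesPL (Kshift K)

/-- `pos(O_K⁺)`: the oracle queries over `sig(O_K⁺) ∩ N_C` entailed by `O_K⁺`. -/
def posOplus (K : Set PLAx) (O : Set HAx) : Set OQuery :=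
  {q | (∀ a ∈ q.lhs, a ∈ cNamesOplus K O) ∧ (∀ b ∈ q.rhs, b ∈ cNamesOplus K O) ∧
     ∀ I : Interp, satOplus I K O → I.satQ q}

/-- `K ∪ O ⊨ C ⊑ D`. -/
def EntailsKO (K : Set PLAx) (O : Set HAx) (C D : PLC) : Prop :=
  ∀ I : Interp, I.satKB K → I.satHKB O → semL I C ⊆ semL I D

/-- `K_O⁻ ∪ pos(O_K⁺) ⊨ C ⊑ D`. -/
def EntailsShift (K : Set PLAx) (O : Set HAx) (C D : PLC) : Prop :=
  ∀ I : Interp, I.satKB (Kminus K) → (∀ q ∈ posOplus K O, I.satQ q) →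
    semL I C ⊆ semL I D

/-- `O_K⁺ ⊨ A₁ ⊓ … ⊓ Aₙ ⊑ ⊥`. -/
def OplusRefutes (K : Set PLAx) (O : Set HAx) (as : List ℕ) : Prop :=
  ∀ I : Interp, satOplus I K O → ∀ d : I.Δ, ¬ ∀ a ∈ as, d ∈ I.conc a

/-- One application of one of the seven oracle normalization rules (Table 4). -/
inductive RwO (K : Set PLAx) (O : Set HAx) : SPL → SPL → Prop
  /-- rule 1: `⊥ ⊓ D ⇝ ⊥` -/
  | botConj (C : SPL) :
      SPL.bot ∈ C.conj → C ≠ SPL.bot → RwO K O C SPL.bot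
  /-- rule 2 -/
  | exBot (r : ℕ) : RwO K O (SPL.ex r SPL.bot) SPL.bot
  /-- rule 3 -/
  | emptyIval (f : ℕ) (l u : ℤ) : u < l → RwO K O (SPL.ival f l u) SPL.bot
  /-- rule 4 -/
  | funcRole (C C' : SPL) (r : ℕ) (D D' : SPL) (rest : Multiset SPL) :
      PLAx.funcRole r ∈ Kminus K →
      C.conj = {SPL.ex r D, SPL.ex r D'} + rest →
      C'.conj = {SPL.ex r (SPL.inter D D')} + rest →
      RwO K O C C'
  /-- rule 5 (unconditional) -/
  | funcProp (C C' : SPL) (f : ℕ) (l₁ u₁ l₂ u₂ : ℤ) (rest : Multiset SPL) :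
      C.conj = {SPL.ival f l₁ u₁, SPL.ival f l₂ u₂} + rest →
      C'.conj = {SPL.ival f (max l₁ l₂) (min u₁ u₂)} + rest →
      RwO K O C C'
  /-- rule 6 -/
  | rangeRule (C C' : SPL) (r a : ℕ) (D : SPL) (rest : Multiset SPL) :
      PLAx.rangeAx r a ∈ Kminus K →
      SPL.atom a ∉ D.conj → SPL.bot ∉ D.conj →
      C.conj = {SPL.ex r D} + rest →
      C'.conj = {SPL.ex r (SPL.inter D (SPL.atom a))} + rest →
      RwO K O C C'
  /-- rule 7: `A₁ ⊓ … ⊓ Aₙ ⊓ D ⇝ ⊥` if `O_K⁺ ⊨ A₁ ⊓ … ⊓ Aₙ ⊑ ⊥` -/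
  | atomsBot (C : SPL) (as : List ℕ) :
      as ≠ [] → (∀ a ∈ as, SPL.atom a ∈ C.conj) → OplusRefutes K O as →
      RwO K O C SPL.bot
  /-- congruence: inside existential restrictions -/
  | exCongr (r : ℕ) (c c' : SPL) : RwO K O c c' → RwO K O (SPL.ex r c) (SPL.ex r c')
  /-- congruence: on one conjunct -/
  | interCongr (C C' c c' : SPL) (rest : Multiset SPL) :
      RwO K O c c' →
      C.conj = {c} + rest → C'.conj = {c'} + rest →
      RwO K O C C'

/-- `C` is normalized w.r.t. `K` and `O`. -/
def NormalizedO (K : Set PLAx) (O : Set HAx) (C : SPL) : Prop := ¬ ∃ C', RwO K O C C'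

/-! ### The canonical model of a normalized simple concept -/

/-- The top-level existential restrictions of a simple concept, in syntactic order. -/
def SPL.exList : SPL → List (ℕ × SPL)
  | .ex r c => [(r, c)]
  | .inter c d => c.exList ++ d.exList
  | _ => []

/-- The top-level concept names of a simple concept. -/
def SPL.atomList : SPL → List ℕ
  | .atom a => [a]
  | .inter c d => c.atomList ++ d.atomList
  | _ => []

/-- The top-level interval constraints of a simple concept. -/
def SPL.ivalList : SPL → List (ℕ × ℤ × ℤ)
  | .ival f l u => [(f, l, u)]
  | .inter c d => c.ivalList ++ d.ivalList
  | _ => []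

/-- The subconcept of `C` reached by following a path of indices into the
    nested top-level existential restrictions. -/
def subAt : List ℕ → SPL → Option SPL
  | [], C => some C
  | i :: p, C =>
    match C.exList[i]? with
    | some rc => subAt p rc.2
    | none => none

/-- The canonical model of a simple concept `C` w.r.t. `K` and `O` (Definition 18):
    its domain is the tree of nested existential restrictions of `C`. -/
def canonInterp (K : Set PLAx) (O : Set HAx) (C : SPL) : Interp where
  Δ := {p : List ℕ // (subAt p C).isSome}
  nonempty := ⟨⟨[], by simp [subAt]⟩⟩
  conc := fun a => {p | ∃ C', subAt p.1 C = some C' ∧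
    (OQuery.mk C'.atomList [a]) ∈ posOplus K O}
  role := fun r => {pq | ∃ (C' : SPL) (i : ℕ) (rc : ℕ × SPL),
    subAt pq.1.1 C = some C' ∧ C'.exList[i]? = some rc ∧ rc.1 = r ∧
    pq.2.1 = pq.1.1 ++ [i]}
  cprop := fun f => {pi | ∃ (C' : SPL) (l : ℤ),
    subAt pi.1.1 C = some C' ∧ (f, l, pi.2) ∈ C'.ivalList}

/-- The distinguished point `d` of the canonical model. -/
def canonRoot (K : Set PLAx) (O : Set HAx) (C : SPL) : (canonInterp K O C).Δ :=
  ⟨[], by simp [subAt]⟩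

/-! ### The oracle structural subsumption algorithm and `PLR^O` -/

/-- `STS^O` (Algorithm 3), with the oracle `O_K⁺`. -/
inductive STSO (K : Set PLAx) (O : Set HAx) : SPL → SPL → Prop
  | botCase (D : SPL) : STSO K O SPL.bot D
  | atomCase (C : SPL) (a : ℕ) :
      (OQuery.mk C.atomList [a]) ∈ posOplus K O → STSO K O C (SPL.atom a)
  | ivalCase (C : SPL) (f : ℕ) (l u l' u' : ℤ) :
      SPL.ival f l' u' ∈ C.conj → l ≤ l' → u' ≤ u → STSO K O C (SPL.ival f l u)
  | exCase (C C' D' : SPL) (r : ℕ) :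
      SPL.ex r C' ∈ C.conj → STSO K O C' D' → STSO K O C (SPL.ex r D')
  | interCase (C D' D'' : SPL) :
      STSO K O C D' → STSO K O C D'' → STSO K O C (SPL.inter D' D'')

def RwOL (K : Set PLAx) (O : Set HAx) (C C' : PLC) : Prop :=
  List.Forall₂ (Relation.ReflTransGen (RwO K O)) C C'

/-- `PLR^O(K, C ⊑ D) = true` (Algorithm 4). -/
def PLROaccept (K : Set PLAx) (O : Set HAx) (C D : PLC) : Prop :=
  ∃ C' : PLC, RwOL K O C C' ∧ (∀ c ∈ C', NormalizedO K O c) ∧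
    ∀ c ∈ splitL C' D, ∃ d ∈ D, STSO K O c d

/-! ### Single-atom form and oracle compilation -/

/-- Auxiliary predicate: every conjunct is a concept name, an interval constraint,
    or an existential restriction whose filler is in single-atom form. -/
def SAaux : SPL → Prop
  | .atom _ => True
  | .bot => False
  | .ival _ _ _ => True
  | .ex _ c => SAaux c ∧ c.atomList.length ≤ 1
  | .inter c d => SAaux c ∧ SAaux d

/-- A simple concept in single-atom form. -/
def SingleAtomS (C : SPL) : Prop := SAaux C ∧ C.atomList.length ≤ 1

/-- A full concept in single-atom form. -/
def SingleAtomL (C : PLC) : Prop := ∀ c ∈ C, SingleAtomS c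

/-- `comp(K, O) = K_O⁻ ∪ { A ⊑ B : (A ⊑ B) ∈ pos(O_K⁺) }`. -/
def compKB (K : Set PLAx) (O : Set HAx) : Set PLAx :=
  Kminus K ∪ {ax | ∃ a b : ℕ, ax = PLAx.incl a b ∧ (OQuery.mk [a] [b]) ∈ posOplus K O}

/-- A definition `B ≡ A₁ ⊓ … ⊓ Aₙ` (expressible in both EL and DL-lite_horn). -/
abbrev CDef := ℕ × List ℕ

def Interp.satDef (I : Interp) (df : CDef) : Prop :=
  I.conc df.1 = {d | ∀ a ∈ df.2, d ∈ I.conc a}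

/-- `K ∪ O ∪ O* ⊨ C ⊑ D`, where `O*` is a list of definitions. -/
def EntailsKODefs (K : Set PLAx) (O : Set HAx) (defs : List CDef) (C D : PLC) : Prop :=
  ∀ I : Interp, I.satKB K → I.satHKB O → (∀ df ∈ defs, I.satDef df) →
    semL I C ⊆ semL I D

def defsSize (defs : List CDef) : ℕ := (defs.map fun p => p.2.length + 1).sum

end PLPaper

namespace PLPaper

/-! ### Auxiliary development for Statement 11 -/

section Aux

open Classical

/-- Conjunct multisets are nonempty. -/
lemma conj_ne_zero (C : SPL) : C.conj ≠ 0 := by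
  induction C with
  | inter a b iha ihb =>
      simp only [SPL.conj]
      intro h
      exact iha (by simpa using (Multiset.eq_zero_iff_forall_notMem.2
        (fun x hx => (Multiset.eq_zero_iff_forall_notMem.1 h x (Multiset.mem_add.2 (Or.inl hx))))))
  | _ => simp [SPL.conj]

/-- Members of `conj` are never intersections. -/
lemma mem_conj_not_inter {C x : SPL} (hx : x ∈ C.conj) : ∀ a b, x ≠ SPL.inter a b := by
  induction C with
  | inter a b iha ihb =>
      simp only [SPL.conj, Multiset.mem_add] at hx
      rcases hx with h | h
      · exact iha h
      · exact ihb h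
  | atom a => simp [SPL.conj] at hx; subst hx; simp
  | bot => simp [SPL.conj] at hx; subst hx; simp
  | ival f l u => simp [SPL.conj] at hx; subst hx; simp
  | ex r c ih => simp [SPL.conj] at hx; subst hx; simp

lemma conj_eq_singleton {C : SPL} (h : ∀ a b, C ≠ SPL.inter a b) : C.conj = {C} := by
  cases C with
  | inter a b => exact absurd rfl (h a b)
  | _ => rfl

/-- Realization: any nonempty multiset of non-intersections is the conjunct
    multiset of some concept. -/
lemma realize (M : Multiset SPL) (h0 : M ≠ 0)
    (hni : ∀ x ∈ M, ∀ a b, x ≠ SPL.inter a b) : ∃ C : SPL, C.conj = M := by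
  induction M using Multiset.induction with
  | empty => exact absurd rfl h0
  | cons y M ih =>
      by_cases hM : M = 0
      · subst hM
        refine ⟨y, ?_⟩
        rw [conj_eq_singleton (hni y (by simp))]
        rfl
      · obtain ⟨Q, hQ⟩ := ih hM (fun x hx => hni x (Multiset.mem_cons_of_mem hx))
        refine ⟨SPL.inter y Q, ?_⟩
        simp only [SPL.conj, hQ]
        rw [conj_eq_singleton (hni y (by simp))]
        simp [Multiset.singleton_add]

lemma mem_conj_atom {C : SPL} {a : ℕ} : SPL.atom a ∈ C.conj ↔ a ∈ C.atomList := by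
  induction C with
  | inter c d ihc ihd => simp [SPL.conj, SPL.atomList, ihc, ihd]
  | atom b => simp [SPL.conj, SPL.atomList]
  | bot => simp [SPL.conj, SPL.atomList]
  | ival f l u => simp [SPL.conj, SPL.atomList]
  | ex r c ih => simp [SPL.conj, SPL.atomList]

lemma mem_conj_ival {C : SPL} {f : ℕ} {l u : ℤ} :
    SPL.ival f l u ∈ C.conj ↔ (f, l, u) ∈ C.ivalList := by
  induction C with
  | inter c d ihc ihd => simp [SPL.conj, SPL.ivalList, ihc, ihd]
  | atom b => simp [SPL.conj, SPL.ivalList]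
  | bot => simp [SPL.conj, SPL.ivalList]
  | ival f' l' u' => simp [SPL.conj, SPL.ivalList]
  | ex r c ih => simp [SPL.conj, SPL.ivalList]

lemma mem_conj_ex {C D : SPL} {r : ℕ} :
    SPL.ex r D ∈ C.conj ↔ (r, D) ∈ C.exList := by
  induction C with
  | inter c d ihc ihd => simp [SPL.conj, SPL.exList, ihc, ihd]
  | atom b => simp [SPL.conj, SPL.exList]
  | bot => simp [SPL.conj, SPL.exList]
  | ival f l u => simp [SPL.conj, SPL.exList]
  | ex r' c ih => simp [SPL.conj, SPL.exList]

lemma sem_conj_iff {C : SPL} {I : Interp} {d : I.Δ} :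
    d ∈ C.sem I ↔ ∀ x ∈ C.conj, d ∈ x.sem I := by
  induction C with
  | inter c c' ihc ihd =>
      simp only [SPL.sem, Set.mem_inter_iff, SPL.conj, Multiset.mem_add, ihc, ihd]
      constructor
      · rintro ⟨h1, h2⟩ x (hx | hx)
        · exact h1 x hx
        · exact h2 x hx
      · intro h
        exact ⟨fun x hx => h x (Or.inl hx), fun x hx => h x (Or.inr hx)⟩
  | atom b => simp [SPL.conj]
  | bot => simp [SPL.conj]
  | ival f l u => simp [SPL.conj]
  | ex r c ih => simp [SPL.conj]

lemma size_le_of_mem_conj {C x : SPL} (hx : x ∈ C.conj) : x.size ≤ C.size := by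
  induction C with
  | inter a b iha ihb =>
      simp only [SPL.conj, Multiset.mem_add] at hx
      rcases hx with h | h
      · exact le_trans (iha h) (by simp [SPL.size]; omega)
      · exact le_trans (ihb h) (by simp [SPL.size]; omega)
  | atom a => simp [SPL.conj] at hx; subst hx; rfl
  | bot => simp [SPL.conj] at hx; subst hx; rfl
  | ival f l u => simp [SPL.conj] at hx; subst hx; rfl
  | ex r c ih => simp [SPL.conj] at hx; subst hx; rfl

/-- Two distinct positions of a list give a pair submultiset. -/
lemma pair_le_coe_of_lt {α : Type*} : ∀ (l : List α) (i j : ℕ) (a b : α), i < j →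
    l[i]? = some a → l[j]? = some b → ({a, b} : Multiset α) ≤ (l : Multiset α) := by
  intro l
  induction l with
  | nil => intro i j a b _ h; simp at h
  | cons x t ih =>
      intro i j a b hij ha hb
      cases i with
      | zero =>
          cases j with
          | zero => omega
          | succ j' =>
              have hb' : b ∈ t := by
                have := List.getElem?_eq_some_iff.1 (by simpa using hb)
                exact this.2 ▸ List.getElem_mem _
              have hxa : x = a := by simpa using ha
              subst hxa
              have h2 : ({x, b} : Multiset α) ≤ x ::ₘ (↑t : Multiset α) :=
                Multiset.cons_le_cons x (by simpa [Multiset.singleton_le] using hb')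
              simpa using h2
      | succ i' =>
          cases j with
          | zero => omega
          | succ j' =>
              have h := ih i' j' a b (by omega) (by simpa using ha) (by simpa using hb)
              calc ({a, b} : Multiset α) ≤ (↑t : Multiset α) := h
                _ ≤ x ::ₘ ↑t := Multiset.le_cons_self _ _
                _ = (↑(x :: t) : Multiset α) := by simp

lemma pair_le_coe {α : Type*} {l : List α} {i j : ℕ} {a b : α} (hij : i ≠ j)
    (ha : l[i]? = some a) (hb : l[j]? = some b) :
    ({a, b} : Multiset α) ≤ (l : Multiset α) := by
  rcases lt_or_gt_of_ne hij with h | h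
  · exact pair_le_coe_of_lt l i j a b h ha hb
  · have h2 := pair_le_coe_of_lt l j i b a h hb ha
    calc ({a, b} : Multiset α) = ({b, a} : Multiset α) := Multiset.cons_swap a b 0
      _ ≤ (l : Multiset α) := h2

lemma pair_le_of_mem_ne {α : Type*} {M : Multiset α} {a b : α}
    (ha : a ∈ M) (hb : b ∈ M) (hne : a ≠ b) : ({a, b} : Multiset α) ≤ M := by
  have hb' : b ∈ M.erase a := Multiset.mem_erase_of_ne (fun h => hne h.symm) |>.2 hb
  have : ({a, b} : Multiset α) = a ::ₘ {b} := rfl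
  rw [this, ← Multiset.cons_erase ha]
  exact Multiset.cons_le_cons a (by simpa [Multiset.singleton_le] using hb')

lemma exMap_le_conj (C : SPL) :
    ((C.exList.map fun rc => SPL.ex rc.1 rc.2 : List SPL) : Multiset SPL) ≤ C.conj := by
  induction C with
  | inter a b iha ihb =>
      simp only [SPL.conj, SPL.exList, List.map_append]
      rw [← Multiset.coe_add]
      exact add_le_add iha ihb
  | atom a => simp [SPL.conj, SPL.exList]
  | bot => simp [SPL.conj, SPL.exList]
  | ival f l u => simp [SPL.conj, SPL.exList]
  | ex r c ih => simp [SPL.conj, SPL.exList]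

lemma subAt_nil (C : SPL) : subAt [] C = some C := rfl

lemma subAt_cons (i : ℕ) (p : List ℕ) (C : SPL) :
    subAt (i :: p) C = match C.exList[i]? with
      | some rc => subAt p rc.2
      | none => none := rfl

lemma subAt_append : ∀ (p : List ℕ) {C C' : SPL}, subAt p C = some C' →
    ∀ (q : List ℕ), subAt (p ++ q) C = subAt q C' := by
  intro p
  induction p with
  | nil => intro C C' h q; rw [subAt_nil] at h; cases h; rfl
  | cons i p ih =>
      intro C C' h q
      rw [subAt_cons] at h
      rcases hget : C.exList[i]? with _ | rc
      · rw [hget] at h; simp at h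
      · rw [hget] at h
        have : subAt ((i :: p) ++ q) C = subAt (p ++ q) rc.2 := by
          show subAt (i :: (p ++ q)) C = _
          rw [subAt_cons, hget]
        rw [this, ih h q]

lemma subAt_singleton {C : SPL} {i : ℕ} {rc : ℕ × SPL} (h : C.exList[i]? = some rc) :
    subAt [i] C = some rc.2 := by
  rw [subAt_cons, h]; rfl

lemma ivalList_subset_ivalsOf {C : SPL} : ∀ t ∈ C.ivalList, t ∈ C.ivalsOf := by
  induction C with
  | inter a b iha ihb =>
      intro t ht
      simp only [SPL.ivalList, List.mem_append] at ht
      simp only [SPL.ivalsOf, List.mem_append]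
      rcases ht with h | h
      · exact Or.inl (iha t h)
      · exact Or.inr (ihb t h)
  | atom a => simp [SPL.ivalList]
  | bot => simp [SPL.ivalList]
  | ival f l u => simp [SPL.ivalList, SPL.ivalsOf]
  | ex r c ih => simp [SPL.ivalList]

lemma exList_ivalsOf {C D : SPL} {r : ℕ} (h : (r, D) ∈ C.exList) :
    ∀ t ∈ D.ivalsOf, t ∈ C.ivalsOf := by
  induction C with
  | inter a b iha ihb =>
      simp only [SPL.exList, List.mem_append] at h
      intro t ht
      simp only [SPL.ivalsOf, List.mem_append]
      rcases h with h | h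
      · exact Or.inl (iha h t ht)
      · exact Or.inr (ihb h t ht)
  | atom a => simp [SPL.exList] at h
  | bot => simp [SPL.exList] at h
  | ival f l u => simp [SPL.exList] at h
  | ex r' c ih =>
      simp only [SPL.exList, List.mem_singleton, Prod.mk.injEq] at h
      intro t ht
      simpa [SPL.ivalsOf, ← h.2] using ht

lemma subAt_ivalsOf : ∀ (p : List ℕ) {C C' : SPL}, subAt p C = some C' →
    ∀ t ∈ C'.ivalsOf, t ∈ C.ivalsOf := by
  intro p
  induction p with
  | nil => intro C C' h; rw [subAt_nil] at h; cases h; exact fun t ht => ht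
  | cons i p ih =>
      intro C C' h
      rw [subAt_cons] at h
      rcases hget : C.exList[i]? with _ | rc
      · rw [hget] at h; simp at h
      · rw [hget] at h
        have hmem : (rc.1, rc.2) ∈ C.exList := by
          have := List.getElem?_eq_some_iff.1 hget
          exact this.2 ▸ List.getElem_mem _
        exact fun t ht => exList_ivalsOf hmem t (ih h t ht)

/-- Lift a rewrite of one conjunct (with non-intersection result) to the whole concept. -/
lemma liftConj {K : Set PLAx} {O : Set HAx} {C x x' : SPL}
    (hx : x ∈ C.conj) (hrw : RwO K O x x') (hni : ∀ a b, x' ≠ SPL.inter a b) :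
    ∃ E, RwO K O C E := by
  by_cases hC : ∀ a b, C ≠ SPL.inter a b
  · rw [conj_eq_singleton hC] at hx
    simp at hx
    subst hx
    exact ⟨x', hrw⟩
  · push_neg at hC
    obtain ⟨a, b, rfl⟩ := hC
    set rest := (SPL.inter a b).conj.erase x with hrest
    have hconj : (SPL.inter a b).conj = {x} + rest := by
      rw [Multiset.singleton_add, hrest, Multiset.cons_erase hx]
    have hrest0 : rest ≠ 0 := by
      intro h0
      have hcard : Multiset.card (SPL.inter a b).conj = 1 := by
        rw [hconj, h0]; simp
      have : Multiset.card (SPL.inter a b).conj =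
          Multiset.card a.conj + Multiset.card b.conj := by
        simp [SPL.conj]
      rw [this] at hcard
      have ha1 : 1 ≤ Multiset.card a.conj := Multiset.card_pos.2
        (by simpa using conj_ne_zero a)
      have hb1 : 1 ≤ Multiset.card b.conj := Multiset.card_pos.2
        (by simpa using conj_ne_zero b)
      omega
    obtain ⟨Q, hQ⟩ := realize (x' ::ₘ rest) (by simp)
      (by
        intro y hy
        rcases Multiset.mem_cons.1 hy with rfl | hy'
        · exact hni
        · exact mem_conj_not_inter (Multiset.mem_of_le (Multiset.erase_le x _) hy'))
    refine ⟨Q, RwO.interCongr _ Q x x' rest hrw hconj ?_⟩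
    rw [Multiset.singleton_add, hQ]

/-- Lift a rewrite at a reachable position to the root concept. -/
lemma liftNode {K : Set PLAx} {O : Set HAx} : ∀ (p : List ℕ) {C C' : SPL},
    subAt p C = some C' → (∃ E, RwO K O C' E) → ∃ E, RwO K O C E := by
  intro p
  induction p with
  | nil => intro C C' h hE; rw [subAt_nil] at h; cases h; exact hE
  | cons i p ih =>
      intro C C' h hE
      rw [subAt_cons] at h
      rcases hget : C.exList[i]? with _ | rc
      · rw [hget] at h; simp at h
      · rw [hget] at h
        obtain ⟨E, hE⟩ := ih h hE
        have hmem : SPL.ex rc.1 rc.2 ∈ C.conj := mem_conj_ex.2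
          (by
            have := List.getElem?_eq_some_iff.1 hget
            exact this.2 ▸ List.getElem_mem _)
        exact liftConj hmem (RwO.exCongr rc.1 rc.2 E hE) (by simp)

/-- Lift a conjunct rewrite at a reachable position to the root concept. -/
lemma liftConjNode {K : Set PLAx} {O : Set HAx} {p : List ℕ} {C C' x x' : SPL}
    (hsub : subAt p C = some C') (hx : x ∈ C'.conj) (hrw : RwO K O x x')
    (hni : ∀ a b, x' ≠ SPL.inter a b) : ∃ E, RwO K O C E :=
  liftNode p hsub (liftConj hx hrw hni)

/-! #### Products of interpretations -/

/-- The direct product of two interpretations. -/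
def prodI (I J : Interp) : Interp where
  Δ := I.Δ × J.Δ
  nonempty := Nonempty.intro (Classical.choice I.nonempty, Classical.choice J.nonempty)
  conc := fun a => {p | p.1 ∈ I.conc a ∧ p.2 ∈ J.conc a}
  role := fun r => {pq | (pq.1.1, pq.2.1) ∈ I.role r ∧ (pq.1.2, pq.2.2) ∈ J.role r}
  cprop := fun f => {pi | (pi.1.1, pi.2) ∈ I.cprop f ∧ (pi.1.2, pi.2) ∈ J.cprop f}

lemma hrole_sem_prod {I J : Interp} (s : HRole) (x : (prodI I J).Δ) (y : (prodI I J).Δ) :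
    (x, y) ∈ s.sem (prodI I J) ↔ (x.1, y.1) ∈ s.sem I ∧ (x.2, y.2) ∈ s.sem J := by
  cases s with
  | name r => exact Iff.rfl
  | inv r => exact Iff.rfl

lemma hatom_sem_prod {I J : Interp} (c : HAtom) (x : (prodI I J).Δ) :
    x ∈ c.sem (prodI I J) ↔ x.1 ∈ c.sem I ∧ x.2 ∈ c.sem J := by
  cases c with
  | name a => exact Iff.rfl
  | top => exact Iff.intro (fun _ => ⟨trivial, trivial⟩) (fun _ => trivial)
  | bot => exact Iff.intro (fun h => False.elim h) (fun h => False.elim h.1)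
  | self s => exact hrole_sem_prod s x x

lemma semChain_prod {I J : Interp} : ∀ (rs : List HRole) (x y : I.Δ × J.Δ),
    (x, y) ∈ HRole.semChain (prodI I J) rs →
    (x.1, y.1) ∈ HRole.semChain I rs ∧ (x.2, y.2) ∈ HRole.semChain J rs := by
  intro rs
  induction rs with
  | nil =>
      intro x y h
      simp only [HRole.semChain, Set.mem_setOf_eq] at h ⊢
      cases h; exact ⟨rfl, rfl⟩
  | cons r rs ih =>
      intro x y h
      simp only [HRole.semChain, Set.mem_setOf_eq] at h ⊢
      obtain ⟨z, hz1, hz2⟩ := h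
      obtain ⟨h1, h2⟩ := (hrole_sem_prod r x z).1 hz1
      obtain ⟨h3, h4⟩ := ih z y hz2
      exact ⟨⟨z.1, h1, h3⟩, ⟨z.2, h2, h4⟩⟩

lemma satHAx_prod {I J : Interp} {ax : HAx} (hI : I.satHAx ax) (hJ : J.satHAx ax) :
    (prodI I J).satHAx ax := by
  cases ax with
  | sub2 c₁ c₂ d =>
      intro x hx
      rw [Set.mem_inter_iff, hatom_sem_prod, hatom_sem_prod] at hx
      rw [hatom_sem_prod]
      exact ⟨hI ⟨hx.1.1, hx.2.1⟩, hJ ⟨hx.1.2, hx.2.2⟩⟩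
  | subEx r c d =>
      rintro x ⟨y, hy1, hy2⟩
      rw [hrole_sem_prod] at hy1
      rw [hatom_sem_prod] at hy2
      rw [hatom_sem_prod]
      exact ⟨hI ⟨y.1, hy1.1, hy2.1⟩, hJ ⟨y.2, hy1.2, hy2.2⟩⟩
  | subAll c r d =>
      intro x y hx hr
      rw [hatom_sem_prod] at hx
      rw [hrole_sem_prod] at hr
      rw [hatom_sem_prod]
      exact ⟨hI hx.1 hr.1, hJ hx.2 hr.2⟩
  | subToEx c r d =>
      intro x hx
      rw [hatom_sem_prod] at hx
      obtain ⟨y₁, h1, h2⟩ := hI hx.1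
      obtain ⟨y₂, h3, h4⟩ := hJ hx.2
      refine ⟨(y₁, y₂), ?_, ?_⟩
      · exact (hrole_sem_prod r x (y₁, y₂)).2 ⟨h1, h3⟩
      · exact (hatom_sem_prod d (y₁, y₂)).2 ⟨h2, h4⟩
  | atMost1 c s d =>
      intro x y z hx hy1 hy2 hz1 hz2
      rw [hatom_sem_prod] at hx hy2 hz2
      rw [hrole_sem_prod] at hy1 hz1
      have e1 : y.1 = z.1 := hI hx.1 hy1.1 hy2.1 hz1.1 hz2.1
      have e2 : y.2 = z.2 := hJ hx.2 hy1.2 hy2.2 hz1.2 hz2.2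
      exact Prod.ext e1 e2
  | atLeast c n s d =>
      intro x hx
      rw [hatom_sem_prod] at hx
      obtain ⟨t₁, hc₁, ht₁⟩ := hI hx.1
      obtain ⟨t₂, hc₂, ht₂⟩ := hJ hx.2
      refine ⟨t₁ ×ˢ t₂, ?_, ?_⟩
      · show n ≤ (t₁ ×ˢ t₂).card
        rw [Finset.card_product]
        rcases Nat.eq_zero_or_pos n with rfl | hn
        · exact Nat.zero_le _
        · calc n ≤ t₁.card := hc₁
            _ = t₁.card * 1 := (Nat.mul_one _).symm
            _ ≤ t₁.card * t₂.card := Nat.mul_le_mul_left _ (le_trans hn hc₂)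
      · intro y hy
        replace hy := Finset.mem_product.1 hy
        obtain ⟨h1, h2⟩ := ht₁ y.1 hy.1
        obtain ⟨h3, h4⟩ := ht₂ y.2 hy.2
        constructor
        · rw [hrole_sem_prod]; exact ⟨h1, h3⟩
        · rw [hatom_sem_prod]; exact ⟨h2, h4⟩
  | rIncl rs r =>
      intro p hp
      obtain ⟨h1, h2⟩ := semChain_prod rs p.1 p.2 hp
      have := hrole_sem_prod r p.1 p.2
      exact this.2 ⟨hI h1, hJ h2⟩
  | rDisj s₁ s₂ =>
      ext p
      simp only [Set.mem_inter_iff, Set.mem_empty_iff_false, iff_false, not_and]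
      intro h1 h2
      obtain ⟨ha, hb⟩ := (hrole_sem_prod s₁ p.1 p.2).1 h1
      obtain ⟨hc, hd⟩ := (hrole_sem_prod s₂ p.1 p.2).1 h2
      have hmem : ((p.1).1, (p.2).1) ∈ HRole.sem I s₁ ∩ HRole.sem I s₂ := ⟨ha, hc⟩
      rw [hI] at hmem
      exact hmem

lemma satOplus_prod {K : Set PLAx} {O : Set HAx} {I J : Interp}
    (hI : satOplus I K O) (hJ : satOplus J K O) : satOplus (prodI I J) K O := by
  constructor
  · intro ax hax
    exact satHAx_prod (hI.1 ax hax) (hJ.1 ax hax)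
  · intro ax hax
    obtain ⟨haxK, hnRF⟩ := hax
    have hIax := hI.2 ax ⟨haxK, hnRF⟩
    have hJax := hJ.2 ax ⟨haxK, hnRF⟩
    cases ax with
    | funcRole r => exact absurd trivial hnRF
    | funcProp f => exact absurd trivial hnRF
    | rangeAx r a => exact absurd trivial hnRF
    | incl a b =>
        intro x hx
        exact ⟨hIax hx.1, hJax hx.2⟩
    | disj a b =>
        ext x
        simp only [Set.mem_inter_iff, Set.mem_empty_iff_false, iff_false, not_and]
        intro h1 h2
        have : x.1 ∈ I.conc a ∩ I.conc b := ⟨h1.1, h2.1⟩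
        rw [hIax] at this
        exact this

/-! #### Horn splitting -/

/-- If every single-disjunct consequence fails, there is a single model of `O_K⁺`
    containing a point satisfying `A` and avoiding every concept of `B`. -/
lemma counterProd (K : Set PLAx) (O : Set HAx) (A : List ℕ) :
    ∀ B : List ℕ,
    (∀ b ∈ B, ¬ ∀ (I : Interp), satOplus I K O →
        ∀ x : I.Δ, (∀ a ∈ A, x ∈ I.conc a) → x ∈ I.conc b) →
    (∃ I : Interp, satOplus I K O ∧ ∃ x : I.Δ, ∀ a ∈ A, x ∈ I.conc a) →
    ∃ I : Interp, satOplus I K O ∧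
      ∃ x : I.Δ, (∀ a ∈ A, x ∈ I.conc a) ∧ ∀ b ∈ B, x ∉ I.conc b := by
  intro B
  induction B with
  | nil =>
      rintro _ ⟨I, hI, x, hx⟩
      exact ⟨I, hI, x, hx, by simp⟩
  | cons b B ih =>
      intro hB hsat
      obtain ⟨I, hI, x, hx, hxB⟩ := ih (fun b' hb' => hB b' (List.mem_cons_of_mem _ hb')) hsat
      have hb := hB b (List.mem_cons_self)
      push_neg at hb
      obtain ⟨J, hJ, y, hy, hyb⟩ := hb
      refine ⟨prodI J I, satOplus_prod hJ hI, (y, x), ?_, ?_⟩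
      · intro a ha
        exact ⟨hy a ha, hx a ha⟩
      · intro b' hb'
        rcases List.mem_cons.1 hb' with rfl | hb'
        · intro hmem
          exact hyb hmem.1
        · intro hmem
          exact hxB b' hb' hmem.2

/-! #### The canonical model -/

open Classical in
/-- The concept names of a node that belong to the oracle signature. -/
noncomputable def AtomsSig (K : Set PLAx) (O : Set HAx) (C' : SPL) : List ℕ :=
  C'.atomList.filter (fun b => decide (b ∈ cNamesOplus K O))

lemma mem_AtomsSig {K : Set PLAx} {O : Set HAx} {C' : SPL} {b : ℕ} :
    b ∈ AtomsSig K O C' ↔ b ∈ C'.atomList ∧ b ∈ cNamesOplus K O := by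
  simp [AtomsSig]

/-- The canonical model of a normalized simple concept (conc uses entailed oracle
    queries over the signature of `O_K⁺`). -/
noncomputable def canon (K : Set PLAx) (O : Set HAx) (C₀ : SPL) : Interp where
  Δ := {p : List ℕ // (subAt p C₀).isSome}
  nonempty := ⟨⟨[], by simp [subAt]⟩⟩
  conc := fun a => {p | ∃ C', subAt p.1 C₀ = some C' ∧
      (a ∈ C'.atomList ∨ OQuery.mk (AtomsSig K O C') [a] ∈ posOplus K O)}
  role := fun r => {pq | ∃ (C' : SPL) (i : ℕ) (rc : ℕ × SPL),
      subAt pq.1.1 C₀ = some C' ∧ C'.exList[i]? = some rc ∧ rc.1 = r ∧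
      pq.2.1 = pq.1.1 ++ [i]}
  cprop := fun f => {pi | ∃ (C' : SPL) (l : ℤ),
      subAt pi.1.1 C₀ = some C' ∧ (f, l, pi.2) ∈ C'.ivalList}

section Canon

variable {K : Set PLAx} {O : Set HAx} {C₀ : SPL}
  (hn : ∀ E, ¬ RwO K O C₀ E)

include hn in
/-- The canonical model satisfies `K_O⁻`. -/
lemma canon_satKB : (canon K O C₀).satKB (Kminus K) := by
  intro ax hax
  cases ax with
  | funcRole r =>
      intro d e e' h1 h2
      obtain ⟨C'1, i, rc, hsub1, hget1, hr1, heq1⟩ := h1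
      obtain ⟨C'2, i', rc', hsub2, hget2, hr2, heq2⟩ := h2
      rw [hsub1] at hsub2
      cases hsub2
      apply Subtype.ext
      rw [heq1, heq2]
      congr 1
      by_contra hij
      have hij' : i ≠ i' := fun h => hij (by rw [h])
      have hpair : ({SPL.ex r rc.2, SPL.ex r rc'.2} : Multiset SPL) ≤ C'1.conj := by
        refine le_trans ?_ (exMap_le_conj C'1)
        refine pair_le_coe hij' ?_ ?_
        · rw [List.getElem?_map, hget1]; simp [hr1]
        · rw [List.getElem?_map, hget2]; simp [hr2]
      set rest := C'1.conj - {SPL.ex r rc.2, SPL.ex r rc'.2} with hrest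
      have hconj : C'1.conj = {SPL.ex r rc.2, SPL.ex r rc'.2} + rest :=
        (add_tsub_cancel_of_le hpair).symm
      obtain ⟨C'', hC''⟩ := realize (SPL.ex r (SPL.inter rc.2 rc'.2) ::ₘ rest) (by simp)
        (by
          intro y hy
          rcases Multiset.mem_cons.1 hy with rfl | hy'
          · simp
          · exact mem_conj_not_inter (Multiset.mem_of_le (Multiset.sub_le_self _ _) hy'))
      have hrw : RwO K O C'1 C'' :=
        RwO.funcRole C'1 C'' r rc.2 rc'.2 rest hax hconj
          (by rw [hC'', Multiset.singleton_add])
      exact absurd (liftNode d.1 hsub1 ⟨C'', hrw⟩) (by simpa using hn)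
  | funcProp f =>
      intro d i j h1 h2
      obtain ⟨C'1, l₁, hsub1, hmem1⟩ := h1
      obtain ⟨C'2, l₂, hsub2, hmem2⟩ := h2
      rw [hsub1] at hsub2
      cases hsub2
      by_contra hij
      have hne : SPL.ival f l₁ i ≠ SPL.ival f l₂ j := by
        intro h; cases h; exact hij rfl
      have hpair : ({SPL.ival f l₁ i, SPL.ival f l₂ j} : Multiset SPL) ≤ C'1.conj :=
        pair_le_of_mem_ne (mem_conj_ival.2 hmem1) (mem_conj_ival.2 hmem2) hne
      set rest := C'1.conj - {SPL.ival f l₁ i, SPL.ival f l₂ j} with hrest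
      have hconj : C'1.conj = {SPL.ival f l₁ i, SPL.ival f l₂ j} + rest :=
        (add_tsub_cancel_of_le hpair).symm
      obtain ⟨C'', hC''⟩ := realize (SPL.ival f (max l₁ l₂) (min i j) ::ₘ rest) (by simp)
        (by
          intro y hy
          rcases Multiset.mem_cons.1 hy with rfl | hy'
          · simp
          · exact mem_conj_not_inter (Multiset.mem_of_le (Multiset.sub_le_self _ _) hy'))
      have hrw : RwO K O C'1 C'' :=
        RwO.funcProp C'1 C'' f l₁ i l₂ j rest hconj
          (by rw [hC'', Multiset.singleton_add])
      exact absurd (liftNode d.1 hsub1 ⟨C'', hrw⟩) (by simpa using hn)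
  | rangeAx r a =>
      intro d e h1
      obtain ⟨C', i, rc, hsub, hget, hr, heq⟩ := h1
      rw [← hr] at hax
      have hsubE : subAt e.1 C₀ = some rc.2 := by
        rw [heq, subAt_append d.1 hsub [i], subAt_singleton hget]
      refine ⟨rc.2, hsubE, Or.inl ?_⟩
      by_contra hnotin
      have hnconj : SPL.atom a ∉ rc.2.conj := fun h => hnotin (mem_conj_atom.1 h)
      have hmemEx : SPL.ex rc.1 rc.2 ∈ C'.conj := mem_conj_ex.2
        (by
          have := List.getElem?_eq_some_iff.1 hget
          exact this.2 ▸ List.getElem_mem _)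
      by_cases hbot : SPL.bot ∈ rc.2.conj
      · by_cases hb : rc.2 = SPL.bot
        · have hrw : RwO K O (SPL.ex rc.1 rc.2) SPL.bot := by
            rw [hb]; exact RwO.exBot rc.1
          exact absurd (liftConjNode hsub hmemEx hrw (by simp)) (by simpa using hn)
        · have hrw : RwO K O rc.2 SPL.bot := RwO.botConj rc.2 hbot hb
          exact absurd (liftNode e.1 hsubE ⟨SPL.bot, hrw⟩) (by simpa using hn)
      · set rest := C'.conj.erase (SPL.ex rc.1 rc.2) with hrest
        have hconj : C'.conj = {SPL.ex rc.1 rc.2} + rest := by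
          rw [Multiset.singleton_add, hrest, Multiset.cons_erase hmemEx]
        obtain ⟨C'', hC''⟩ := realize
          (SPL.ex rc.1 (SPL.inter rc.2 (SPL.atom a)) ::ₘ rest) (by simp)
          (by
            intro y hy
            rcases Multiset.mem_cons.1 hy with rfl | hy'
            · simp
            · exact mem_conj_not_inter (Multiset.mem_of_le (Multiset.erase_le _ _) hy'))
        have hrw : RwO K O C' C'' :=
          RwO.rangeRule C' C'' rc.1 a rc.2 rest hax hnconj hbot hconj
            (by rw [hC'', Multiset.singleton_add])
        exact absurd (liftNode d.1 hsub ⟨C'', hrw⟩) (by simpa using hn)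
  | incl a b => exact absurd hax.2 (by simp [isRF])
  | disj a b => exact absurd hax.2 (by simp [isRF])

include hn in
/-- The canonical model satisfies every query of `pos(O_K⁺)`. -/
lemma canon_satQ (hsat : ∃ I : Interp, satOplus I K O) :
    ∀ q ∈ posOplus K O, (canon K O C₀).satQ q := by
  intro q hq
  obtain ⟨hq1, hq2, hq3⟩ := hq
  intro p hp
  obtain ⟨C', hsub⟩ := Option.isSome_iff_exists.1 p.2
  have hent : ∀ a ∈ q.lhs, ∀ (I : Interp), satOplus I K O →
      ∀ x : I.Δ, (∀ b ∈ AtomsSig K O C', x ∈ I.conc b) → x ∈ I.conc a := by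
    intro a ha
    obtain ⟨C'', hsub'', hcase⟩ := hp a ha
    rw [hsub] at hsub''
    cases hsub''
    rcases hcase with hA | hposq
    · intro I _ x hx
      exact hx a (mem_AtomsSig.2 ⟨hA, hq1 a ha⟩)
    · intro I hI x hx
      have := hposq.2.2 I hI (show x ∈ {d | ∀ b ∈ AtomsSig K O C', d ∈ I.conc b} from hx)
      simpa using this
  have hsatA' : ∃ I : Interp, satOplus I K O ∧
      ∃ x : I.Δ, ∀ b ∈ AtomsSig K O C', x ∈ I.conc b := by
    by_cases hA0 : C'.atomList = []
    · obtain ⟨I, hI⟩ := hsat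
      refine ⟨I, hI, Classical.choice I.nonempty, ?_⟩
      intro b hb
      rw [mem_AtomsSig, hA0] at hb
      simp at hb
    · have hnr : ¬ OplusRefutes K O C'.atomList := by
        intro href
        exact absurd (liftNode p.1 hsub
          ⟨SPL.bot, RwO.atomsBot C' C'.atomList hA0
            (fun a ha => mem_conj_atom.2 ha) href⟩) (by simpa using hn)
      rw [OplusRefutes] at hnr
      push_neg at hnr
      obtain ⟨I, hI, d, hd⟩ := hnr
      exact ⟨I, hI, d, fun b hb => hd b (mem_AtomsSig.1 hb).1⟩
  by_contra hcon
  simp only [Set.mem_setOf_eq, not_exists, not_and] at hcon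
  have hnent : ∀ b ∈ q.rhs, ¬ ∀ (I : Interp), satOplus I K O →
      ∀ x : I.Δ, (∀ a ∈ AtomsSig K O C', x ∈ I.conc a) → x ∈ I.conc b := by
    intro b hb hforall
    refine hcon b hb ⟨C', hsub, Or.inr ⟨?_, ?_, ?_⟩⟩
    · exact fun a ha => (mem_AtomsSig.1 ha).2
    · intro b' hb'
      rw [List.mem_singleton] at hb'
      exact hb' ▸ hq2 b hb
    · intro I hI x hx
      refine ⟨b, by simp, ?_⟩
      exact hforall I hI x (by simpa using hx)
  obtain ⟨I, hI, x, hx, hxB⟩ := counterProd K O (AtomsSig K O C') q.rhs hnent hsatA'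
  have hxlhs : x ∈ {d | ∀ a ∈ q.lhs, d ∈ I.conc a} := fun a ha => hent a ha I hI x hx
  obtain ⟨b, hb, hxb⟩ := hq3 I hI hxlhs
  exact hxB b hb hxb

lemma size_pos (C : SPL) : 1 ≤ C.size := by
  cases C <;> simp [SPL.size]

include hn in
/-- Every node of the canonical model satisfies its own subconcept. -/
lemma canon_nodeSem : ∀ (n : ℕ) (C' : SPL), C'.size ≤ n → C' ≠ SPL.bot →
    ∀ p : (canon K O C₀).Δ, subAt p.1 C₀ = some C' → p ∈ C'.sem (canon K O C₀) := by
  intro n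
  induction n with
  | zero => intro C' h; have := size_pos C'; omega
  | succ n ih =>
      intro C' hsz hCbot p hsub
      rw [sem_conj_iff]
      intro x hx
      cases hx' : x with
      | atom a =>
          subst hx'
          exact ⟨C', hsub, Or.inl (mem_conj_atom.1 hx)⟩
      | bot =>
          subst hx'
          exact absurd (liftNode p.1 hsub ⟨SPL.bot, RwO.botConj C' hx hCbot⟩)
            (by simpa using hn)
      | ival f l u =>
          subst hx'
          have hlu : l ≤ u := by
            by_contra hlt
            exact absurd (liftConjNode hsub hx (RwO.emptyIval f l u (by omega)) (by simp))
              (by simpa using hn)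
          exact ⟨u, hlu, le_rfl, C', l, hsub, mem_conj_ival.1 hx⟩
      | ex r D =>
          subst hx'
          obtain ⟨i, hget⟩ := List.mem_iff_getElem?.1 (mem_conj_ex.1 hx)
          have hq : (subAt (p.1 ++ [i]) C₀).isSome := by
            rw [subAt_append p.1 hsub [i], subAt_singleton hget]
            rfl
          have hDbot : D ≠ SPL.bot := by
            rintro rfl
            exact absurd (liftConjNode hsub hx (RwO.exBot r) (by simp))
              (by simpa using hn)
          have hDsz : D.size ≤ n := by
            have h1 := size_le_of_mem_conj hx
            simp only [SPL.size] at h1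
            omega
          have hsem := ih D hDsz hDbot ⟨p.1 ++ [i], hq⟩
            (by rw [subAt_append p.1 hsub [i], subAt_singleton hget])
          exact ⟨⟨p.1 ++ [i], hq⟩, ⟨C', i, (r, D), hsub, hget, rfl, rfl⟩, hsem⟩
      | inter a b =>
          subst hx'
          exact absurd rfl (mem_conj_not_inter hx a b)

end Canon

/-! #### Tracing a point of a model along the tree of a concept -/

noncomputable def trace (I : Interp) : List ℕ → SPL → I.Δ → I.Δ
  | [], _, x => x
  | i :: p, C, x =>
    match C.exList[i]? with
    | some rc => trace I p rc.2
        (if h : ∃ y, (x, y) ∈ I.role rc.1 ∧ y ∈ rc.2.sem I then h.choose else x)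
    | none => x

@[simp] lemma trace_nil (I : Interp) (C : SPL) (x : I.Δ) : trace I [] C x = x := rfl

lemma trace_cons (I : Interp) {C : SPL} {i : ℕ} {rc : ℕ × SPL}
    (hget : C.exList[i]? = some rc) (p : List ℕ) (x : I.Δ) :
    trace I (i :: p) C x = trace I p rc.2
      (if h : ∃ y, (x, y) ∈ I.role rc.1 ∧ y ∈ rc.2.sem I then h.choose else x) := by
  rw [trace, hget]

lemma sem_ex_of_get {I : Interp} {C : SPL} {i : ℕ} {rc : ℕ × SPL}
    (hget : C.exList[i]? = some rc) {x : I.Δ} (hx : x ∈ C.sem I) :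
    ∃ y, (x, y) ∈ I.role rc.1 ∧ y ∈ rc.2.sem I := by
  have hmem : SPL.ex rc.1 rc.2 ∈ C.conj := mem_conj_ex.2
    (by
      have := List.getElem?_eq_some_iff.1 hget
      exact this.2 ▸ List.getElem_mem _)
  exact (sem_conj_iff.1 hx) _ hmem

lemma trace_sem (I : Interp) : ∀ (p : List ℕ) (C : SPL) (x : I.Δ), x ∈ C.sem I →
    ∀ {C' : SPL}, subAt p C = some C' → trace I p C x ∈ C'.sem I := by
  intro p
  induction p with
  | nil =>
      intro C x hx C' h
      rw [subAt_nil] at h; cases h; simpa using hx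
  | cons i p ih =>
      intro C x hx C' h
      rw [subAt_cons] at h
      rcases hget : C.exList[i]? with _ | rc
      · rw [hget] at h; simp at h
      · rw [hget] at h
        rw [trace_cons I hget]
        have hex := sem_ex_of_get hget hx
        rw [dif_pos hex]
        exact ih rc.2 hex.choose hex.choose_spec.2 h

lemma trace_append (I : Interp) : ∀ (p : List ℕ) (C : SPL) {C' : SPL},
    subAt p C = some C' → ∀ (x : I.Δ) (l : List ℕ),
    trace I (p ++ l) C x = trace I l C' (trace I p C x) := by
  intro p
  induction p with
  | nil =>
      intro C C' h x l
      rw [subAt_nil] at h; cases h; simp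
  | cons i p ih =>
      intro C C' h x l
      rw [subAt_cons] at h
      rcases hget : C.exList[i]? with _ | rc
      · rw [hget] at h; simp at h
      · rw [hget] at h
        have h1 : ((i :: p) ++ l) = i :: (p ++ l) := rfl
        rw [h1, trace_cons I hget, trace_cons I hget, ih rc.2 h]

lemma trace_step (I : Interp) {p : List ℕ} {C C' : SPL} {i : ℕ} {rc : ℕ × SPL}
    (hsub : subAt p C = some C') (hget : C'.exList[i]? = some rc)
    {x : I.Δ} (hx : x ∈ C.sem I) :
    (trace I p C x, trace I (p ++ [i]) C x) ∈ I.role rc.1 ∧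
      trace I (p ++ [i]) C x ∈ rc.2.sem I := by
  rw [trace_append I p C hsub x [i]]
  have hy : trace I p C x ∈ C'.sem I := trace_sem I p C x hx hsub
  have hex := sem_ex_of_get hget hy
  have heq : trace I [i] C' (trace I p C x) = hex.choose := by
    rw [trace_cons I hget, dif_pos hex, trace_nil]
  rw [heq]
  exact hex.choose_spec

section Canon2

variable {K : Set PLAx} {O : Set HAx} {C₀ : SPL}
  (hn : ∀ E, ¬ RwO K O C₀ E)

include hn in
/-- The key homomorphism/transfer lemma: canonical membership transfers to any
    model of `K_O⁻ ∪ pos(O_K⁺)` along the trace, for interval-safe targets. -/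
lemma transfer (I : Interp) (hI2 : ∀ q ∈ posOplus K O, I.satQ q)
    (x : I.Δ) (hx : x ∈ C₀.sem I) :
    ∀ (e : SPL),
      (∀ ivc ∈ C₀.ivalsOf, ∀ ivd ∈ e.ivalsOf,
        Set.Icc ivc.2.1 ivc.2.2 ⊆ Set.Icc ivd.2.1 ivd.2.2 ∨
          Set.Icc ivc.2.1 ivc.2.2 ∩ Set.Icc ivd.2.1 ivd.2.2 = ∅) →
      ∀ (p : (canon K O C₀).Δ), p ∈ e.sem (canon K O C₀) →
        trace I p.1 C₀ x ∈ e.sem I := by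
  intro e
  induction e with
  | atom a =>
      intro _ p hp
      obtain ⟨C', hsub, hcase⟩ := hp
      have hxC' : trace I p.1 C₀ x ∈ C'.sem I := trace_sem I p.1 C₀ x hx hsub
      rcases hcase with hA | hq
      · exact (sem_conj_iff.1 hxC') _ (mem_conj_atom.2 hA)
      · have hlhs : trace I p.1 C₀ x ∈ {d | ∀ b ∈ AtomsSig K O C', d ∈ I.conc b} := by
          intro b hb
          exact (sem_conj_iff.1 hxC') _ (mem_conj_atom.2 (mem_AtomsSig.1 hb).1)
        have := hI2 _ hq hlhs
        obtain ⟨b, hb, hxb⟩ := this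
        rw [List.mem_singleton] at hb
        subst hb
        exact hxb
  | bot =>
      intro _ p hp
      exact absurd hp (by simp [SPL.sem])
  | ival f l u =>
      intro hS p hp
      obtain ⟨i, hli, hiu, C', l₀, hsub, hmem⟩ := hp
      have hxC' : trace I p.1 C₀ x ∈ C'.sem I := trace_sem I p.1 C₀ x hx hsub
      have hivc : (f, l₀, i) ∈ C₀.ivalsOf :=
        subAt_ivalsOf p.1 hsub _ (ivalList_subset_ivalsOf _ hmem)
      have hl₀i : l₀ ≤ i := by
        by_contra hlt
        exact absurd (liftConjNode hsub (mem_conj_ival.2 hmem)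
          (RwO.emptyIval f l₀ i (by omega)) (by simp)) (by simpa using hn)
      have hsafe1 := hS (f, l₀, i) hivc (f, l, u) (by simp [SPL.ivalsOf])
      have hsub2 : Set.Icc l₀ i ⊆ Set.Icc l u := by
        rcases hsafe1 with h | h
        · exact h
        · exfalso
          have : i ∈ Set.Icc l₀ i ∩ Set.Icc l u := ⟨⟨hl₀i, le_rfl⟩, ⟨hli, hiu⟩⟩
          rw [h] at this
          exact this
      obtain ⟨j, h1, h2, h3⟩ := (sem_conj_iff.1 hxC') _ (mem_conj_ival.2 hmem)
      have hj := hsub2 (⟨h1, h2⟩ : j ∈ Set.Icc l₀ i)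
      exact ⟨j, hj.1, hj.2, h3⟩
  | ex r e' ih =>
      intro hS p hp
      obtain ⟨q, hrole, hqsem⟩ := hp
      obtain ⟨C', i, rc, hsub, hget, hr, heq⟩ := hrole
      have hstep := trace_step I hsub hget hx
      have hih := ih (fun ivc hc ivd hd => hS ivc hc ivd (by simpa [SPL.ivalsOf] using hd))
        q hqsem
      refine ⟨trace I q.1 C₀ x, ?_, hih⟩
      rw [heq, ← hr]
      exact hstep.1
  | inter a b iha ihb =>
      intro hS p hp
      refine ⟨iha (fun ivc hc ivd hd => hS ivc hc ivd ?_) p hp.1,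
        ihb (fun ivc hc ivd hd => hS ivc hc ivd ?_) p hp.2⟩
      · simp only [SPL.ivalsOf, List.mem_append]; exact Or.inl hd
      · simp only [SPL.ivalsOf, List.mem_append]; exact Or.inr hd

end Canon2

end Aux

/-- for every interval-safe PL subsumption query
    `σ = (C₁ ⊔ … ⊔ C_m ⊑ D₁ ⊔ … ⊔ Dₙ)` with each `Cᵢ` normalized w.r.t. `K` and `O`:
    `K_O⁻ ∪ pos(O_K⁺) ⊨ σ` iff for every `i` there is `j` with
    `K_O⁻ ∪ pos(O_K⁺) ⊨ Cᵢ ⊑ Dⱼ`. -/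
theorem statement_11 (K : Set PLAx) (O : Set HAx) (Cs Ds : PLC)
    (hK : K.Finite) (hO : O.Finite) (hCs : Cs ≠ []) (hDs : Ds ≠ [])
    (hsig : (rNamesPL K ∪ rNamesL Cs ∪ rNamesL Ds) ∩ rNamesH O = ∅)
    (hsafe : IntervalSafe Cs Ds)
    (hnorm : ∀ c ∈ Cs, NormalizedO K O c) :
    EntailsShift K O Cs Ds ↔ ∀ c ∈ Cs, ∃ d ∈ Ds, EntailsShift K O [c] [d] := by
  constructor
  · -- hard direction
    intro hE c hc
    have hn : ∀ E, ¬ RwO K O c E := fun E hrw => (hnorm c hc) ⟨E, hrw⟩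
    by_cases hOsat : ∃ I : Interp, satOplus I K O
    · by_cases hcbot : c = SPL.bot
      · obtain ⟨d, hd⟩ := List.exists_mem_of_ne_nil Ds hDs
        refine ⟨d, hd, ?_⟩
        intro I _ _ y hy
        obtain ⟨c', hc', hyc⟩ := hy
        rw [List.mem_singleton] at hc'
        rw [hc', hcbot] at hyc
        exact absurd hyc (by simp [SPL.sem])
      · have hroot_valid : (subAt [] c).isSome := by rw [subAt_nil]; rfl
        set M := canon K O c with hM
        set root : M.Δ := ⟨[], hroot_valid⟩ with hroot
        have hrootsem : root ∈ c.sem M :=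
          canon_nodeSem hn c.size c le_rfl hcbot root (subAt_nil c)
        have hMkb := canon_satKB hn
        have hMq := canon_satQ hn hOsat
        have hmem : root ∈ semL M Ds := hE M hMkb hMq ⟨c, hc, hrootsem⟩
        obtain ⟨d, hd, hrootd⟩ := hmem
        refine ⟨d, hd, ?_⟩
        intro I h1 h2 y hy
        obtain ⟨c', hc', hyc⟩ := hy
        rw [List.mem_singleton] at hc'
        rw [hc'] at hyc
        have hS : ∀ ivc ∈ c.ivalsOf, ∀ ivd ∈ d.ivalsOf,
            Set.Icc ivc.2.1 ivc.2.2 ⊆ Set.Icc ivd.2.1 ivd.2.2 ∨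
              Set.Icc ivc.2.1 ivc.2.2 ∩ Set.Icc ivd.2.1 ivd.2.2 = ∅ := by
          intro ivc hcmem ivd hdmem
          exact hsafe ivc (List.mem_flatMap.2 ⟨c, hc, hcmem⟩)
            ivd (List.mem_flatMap.2 ⟨d, hd, hdmem⟩)
        have htr := transfer hn I h2 y hyc d hS root hrootd
        rw [hroot] at htr
        simp only [trace_nil] at htr
        exact ⟨d, by simp, htr⟩
    · obtain ⟨d, hd⟩ := List.exists_mem_of_ne_nil Ds hDs
      refine ⟨d, hd, ?_⟩
      intro I _ h2
      exfalso
      have hq0 : (OQuery.mk [] []) ∈ posOplus K O :=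
        ⟨by simp, by simp, fun I hI => absurd ⟨I, hI⟩ hOsat⟩
      obtain ⟨x⟩ := I.nonempty
      have := h2 _ hq0 (show x ∈ {d | ∀ a ∈ ([] : List ℕ), d ∈ I.conc a} by simp)
      simp at this
  · -- easy direction
    intro h I h1 h2 y hy
    obtain ⟨c, hc, hyc⟩ := hy
    obtain ⟨d, hd, hcd⟩ := h c hc
    obtain ⟨d', hd', hsem⟩ := hcd I h1 h2 ⟨c, by simp, hyc⟩
    rw [List.mem_singleton] at hd'
    rw [hd'] at hsem
    exact ⟨d, hd, hsem⟩

end PLPaper
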